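/- Suppose there are sequences kₙ ∈ [0,1) and εₙ ≥ 0 with εₙ/(1−kₙ) → 0 as n → ∞ such that d(Tⁿx,Tⁿy)² ≤ kₙ·d(x,y)² + (1−kₙ)·D² + εₙ for all (x,y) ∈ (A×B) ∪ (B×A) and all n (this is the strict contractive condition (3.1)–(3.2) with kₙ = (αₙ+βₙ(1+2μₙ))/(1−βₙ) ∈ [0,1) and γₙ = o(1−βₙ)). Then lim_{n→∞} d(Tⁿx,Tⁿy) = D for every (x,y) ∈ (A×B) ∪ (B×A), and lim_{n→∞} d(Tⁿx, T^{n+1}x) = D for every x ∈ A∪B. (Theorem 3.3(i).) -/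

import Mathlib

open Filter Topology

/-- Theorem 3.3(i): under the strict cyclic contractive condition,
`d(Tⁿx,Tⁿy) → D` for every pair `(x,y) ∈ (A×B) ∪ (B×A)` and
`d(Tⁿx, T^{n+1}x) → D` for every `x ∈ A ∪ B`. -/
theorem thm3_3_i {X : Type*} [MetricSpace X] (A B : Set X) (hA : A.Nonempty) (hB : B.Nonempty)
    (T : X → X) (hTA : Set.MapsTo T A B) (hTB : Set.MapsTo T B A)
    (D : ℝ) (hD : D = sInf (Set.image2 dist A B))
    (k ε : ℕ → ℝ)
    (hk : ∀ n, 0 ≤ k n ∧ k n < 1) (hε : ∀ n, 0 ≤ ε n)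
    (hke : Tendsto (fun n => ε n / (1 - k n)) atTop (nhds 0))
    (hineq : ∀ n x y, (x ∈ A ∧ y ∈ B) ∨ (x ∈ B ∧ y ∈ A) →
      dist (T^[n] x) (T^[n] y) ^ 2 ≤
        k n * dist x y ^ 2 + (1 - k n) * D ^ 2 + ε n) :
    (∀ x y : X, (x ∈ A ∧ y ∈ B) ∨ (x ∈ B ∧ y ∈ A) →
      Tendsto (fun n => dist (T^[n] x) (T^[n] y)) atTop (nhds D)) ∧
    (∀ x ∈ A ∪ B, Tendsto (fun n => dist (T^[n] x) (T^[n + 1] x)) atTop (nhds D)) := by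
  -- basic facts about D
  have hbdd : BddBelow (Set.image2 dist A B) := by
    refine ⟨0, ?_⟩
    rintro d ⟨a, _, b, _, rfl⟩
    exact dist_nonneg
  have hDle : ∀ a ∈ A, ∀ b ∈ B, D ≤ dist a b := by
    intro a ha b hb
    rw [hD]
    exact csInf_le hbdd (Set.mem_image2_of_mem ha hb)
  have hD0 : 0 ≤ D := by
    rw [hD]
    apply Real.sInf_nonneg
    rintro d ⟨a, _, b, _, rfl⟩
    exact dist_nonneg
  -- parity of iterates
  have hmem : ∀ (x y : X), (x ∈ A ∧ y ∈ B) ∨ (x ∈ B ∧ y ∈ A) → ∀ n,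
      (T^[n] x ∈ A ∧ T^[n] y ∈ B) ∨ (T^[n] x ∈ B ∧ T^[n] y ∈ A) := by
    intro x y hxy n
    induction n with
    | zero => simpa using hxy
    | succ n ih =>
      rw [Function.iterate_succ_apply', Function.iterate_succ_apply']
      rcases ih with ⟨h1, h2⟩ | ⟨h1, h2⟩
      · exact Or.inr ⟨hTA h1, hTB h2⟩
      · exact Or.inl ⟨hTB h1, hTA h2⟩
  -- main convergence statement
  have main : ∀ x y : X, (x ∈ A ∧ y ∈ B) ∨ (x ∈ B ∧ y ∈ A) →
      Tendsto (fun n => dist (T^[n] x) (T^[n] y)) atTop (nhds D) := by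
    intro x y hxy
    set f : ℕ → ℝ := fun n => dist (T^[n] x) (T^[n] y) with hf
    have hDf : ∀ n, D ≤ f n := by
      intro n
      rcases hmem x y hxy n with ⟨h1, h2⟩ | ⟨h1, h2⟩
      · exact hDle _ h1 _ h2
      · rw [hf]; simp only []
        rw [dist_comm]
        exact hDle _ h2 _ h1
    set a : ℕ → ℝ := fun n => f n ^ 2 - D ^ 2 with ha
    have ha0 : ∀ n, 0 ≤ a n := by
      intro n
      have := hDf n
      have : D ^ 2 ≤ f n ^ 2 := by nlinarith [hD0]
      simp only [ha]; linarith
    have hstep : ∀ n m, a (n + m) ≤ k n * a m + ε n := by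
      intro n m
      have h := hineq n (T^[m] x) (T^[m] y) (hmem x y hxy m)
      rw [← Function.iterate_add_apply, ← Function.iterate_add_apply] at h
      simp only [ha, hf] at *
      nlinarith [h]
    -- iterated step
    have hiter : ∀ n, 0 < n → ∀ j m, a (n * j + m) ≤ k n ^ j * a m + ε n / (1 - k n) := by
      intro n hn j m
      have h1k : (0:ℝ) < 1 - k n := by linarith [(hk n).2]
      have hE0 : 0 ≤ ε n / (1 - k n) := div_nonneg (hε n) h1k.le
      induction j with
      | zero => simp only [Nat.mul_zero, Nat.zero_add, pow_zero, one_mul]; linarith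
      | succ j ih =>
        have : n * (j + 1) + m = n + (n * j + m) := by ring
        rw [this]
        have h2 := hstep n (n * j + m)
        have h3 : k n * a (n * j + m) ≤ k n * (k n ^ j * a m + ε n / (1 - k n)) :=
          mul_le_mul_of_nonneg_left ih (hk n).1
        have hkey : k n * (ε n / (1 - k n)) + ε n = ε n / (1 - k n) := by
          field_simp
          ring
        calc a (n + (n * j + m)) ≤ k n * a (n * j + m) + ε n := h2
          _ ≤ k n * (k n ^ j * a m + ε n / (1 - k n)) + ε n := by linarith
          _ = k n ^ (j + 1) * a m + (k n * (ε n / (1 - k n)) + ε n) := by ring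
          _ = k n ^ (j + 1) * a m + ε n / (1 - k n) := by rw [hkey]
    -- a tends to 0
    have haten : Tendsto a atTop (nhds 0) := by
      rw [Metric.tendsto_atTop]
      intro δ hδ
      -- choose n with ε n / (1 - k n) < δ/2 and n ≥ 1
      have := (Metric.tendsto_atTop.1 hke) (δ / 2) (by linarith)
      obtain ⟨n0, hn0⟩ := this
      set n := max n0 1 with hn
      have hn1 : 0 < n := lt_of_lt_of_le one_pos (le_max_right _ _)
      have hE : ε n / (1 - k n) < δ / 2 := by
        have := hn0 n (le_max_left _ _)
        rw [Real.dist_eq, sub_zero] at this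
        exact lt_of_le_of_lt (le_abs_self _) this
      -- bound on finitely many initial values
      obtain ⟨C, hC⟩ : ∃ C, ∀ m < n, a m ≤ C := by
        refine ⟨(Finset.range n).sup' (by simp [hn1.ne']) a, fun m hm => ?_⟩
        exact Finset.le_sup' a (Finset.mem_range.mpr hm)
      have hC0 : 0 ≤ C := le_trans (ha0 0) (hC 0 hn1)
      -- choose J with k n ^ J * C < δ/2
      have hpow : Tendsto (fun j => k n ^ j * C) atTop (nhds 0) := by
        have := tendsto_pow_atTop_nhds_zero_of_lt_one (hk n).1 (hk n).2
        simpa using this.mul_const C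
      obtain ⟨J, hJ⟩ := (Metric.tendsto_atTop.1 hpow) (δ / 2) (by linarith)
      refine ⟨n * (J + 1), fun N hN => ?_⟩
      have hjN : J ≤ N / n := by
        rw [Nat.le_div_iff_mul_le hn1]
        calc J * n ≤ n * (J + 1) := by nlinarith
          _ ≤ N := hN
      have hNeq : n * (N / n) + N % n = N := Nat.div_add_mod N n
      have hmlt : N % n < n := Nat.mod_lt _ hn1
      have h1 : a N ≤ k n ^ (N / n) * a (N % n) + ε n / (1 - k n) := by
        have := hiter n hn1 (N / n) (N % n)
        rwa [hNeq] at this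
      have h2 : k n ^ (N / n) * a (N % n) ≤ k n ^ J * C := by
        have hk1 : k n ^ (N / n) ≤ k n ^ J :=
          pow_le_pow_of_le_one (hk n).1 (hk n).2.le hjN
        have hA1 : a (N % n) ≤ C := hC _ hmlt
        have := mul_le_mul hk1 hA1 (ha0 _) (pow_nonneg (hk n).1 J)
        exact this
      have h3 : k n ^ J * C < δ / 2 := by
        have := hJ J le_rfl
        rw [Real.dist_eq, sub_zero] at this
        exact lt_of_le_of_lt (le_abs_self _) this
      rw [Real.dist_eq, sub_zero, abs_of_nonneg (ha0 N)]
      calc a N ≤ k n ^ (N / n) * a (N % n) + ε n / (1 - k n) := h1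
        _ ≤ k n ^ J * C + ε n / (1 - k n) := add_le_add h2 le_rfl
        _ < δ / 2 + δ / 2 := add_lt_add h3 hE
        _ = δ := by ring
    -- conclude f → D via sqrt
    have hfn : ∀ n, f n = Real.sqrt (a n + D ^ 2) := by
      intro n
      simp only [ha]
      rw [sub_add_cancel, Real.sqrt_sq dist_nonneg]
    have : Tendsto (fun n => Real.sqrt (a n + D ^ 2)) atTop (nhds (Real.sqrt (0 + D ^ 2))) := by
      exact (Real.continuous_sqrt.tendsto _).comp (haten.add_const _)
    rw [zero_add, Real.sqrt_sq hD0] at this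
    convert this using 1
    funext n
    exact hfn n
  refine ⟨main, ?_⟩
  intro x hx
  have : (fun n => dist (T^[n] x) (T^[n + 1] x)) = fun n => dist (T^[n] x) (T^[n] (T x)) := by
    funext n
    rw [Function.iterate_succ_apply]
  rw [this]
  rcases hx with hxA | hxB
  · exact main x (T x) (Or.inl ⟨hxA, hTA hxA⟩)
  · exact main x (T x) (Or.inr ⟨hxB, hTB hxB⟩)
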